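/- Let X and Y be metric spaces equipped with σ-finite Borel measures. Let λ₁ ≥ 1, λ₂ ≥ 1, c₁ ≥ 0, c₂ ≥ 0 and let f : X → Y be a measurable map with (1/λ₂)(dist(x,x') − c₂) ≤ dist(f x, f x') ≤ λ₁·dist(x,x') + c₁ for all x, x' ∈ X. Let p ≥ 1, let φ : Y × Y → [0,∞) be measurable with φ ≤ Sφ everywhere, ∫_Y φ(y, y') dy' = 1 for every y, and φ(y,y') = 0 whenever dist(y,y') > Rφ; let ψ : X × X → [0,∞) be measurable with ψ ≤ Sψ everywhere and ψ(x,x') = 0 whenever dist(x,x') > Rψ. Assume V := sup_{x∈X} vol(closed ball B(x, 2λ₂Rφ + c₂)) < ∞. Let a : Y × Y → ℝ be measurable, and define (a ∗_t φ)(x,x') = ∫_{Y×Y} a(y,y') φ(f x, y) φ(f x', y') dy dy' and ψ'(y,y') = ∫_{X×X} φ(f x, y) φ(f x', y') ψ(x,x') dx dx'. Then: (i) ∫_{X×X} |(a ∗_t φ)(x,x')|^p ψ(x,x') dx dx' ≤ ∫_{Y×Y} |a(y,y')|^p ψ'(y,y') dy dy'; (ii) ψ'(y,y') = 0 whenever dist(y,y')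 > 2Rφ + λ₁Rψ + c₁; (iii) ψ'(y,y') ≤ Sψ·(Sφ·V)² for all y, y'. -/

import Mathlib

open Metric MeasureTheory
open scoped ENNReal NNReal

private lemma jensen_rpow {α : Type*} [MeasurableSpace α] (μ : Measure α)
    [IsProbabilityMeasure μ] {g : α → ℝ≥0∞} (hg : AEMeasurable g μ) {p : ℝ} (hp : 1 ≤ p) :
    (∫⁻ a, g a ∂μ) ^ p ≤ ∫⁻ a, g a ^ p ∂μ := by
  rcases eq_or_lt_of_le hp with h1 | h1
  · simp [← h1]
  · have hp0 : (0:ℝ) < p := lt_trans zero_lt_one h1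
    have hpq := Real.HolderConjugate.conjExponent h1
    have H := ENNReal.lintegral_mul_le_Lp_mul_Lq μ hpq hg
      (aemeasurable_const (b := (1 : ℝ≥0∞)))
    simp only [Pi.mul_apply, mul_one, ENNReal.one_rpow, lintegral_const, measure_univ,
      one_mul] at H
    calc (∫⁻ a, g a ∂μ) ^ p ≤ ((∫⁻ a, g a ^ p ∂μ) ^ (1 / p)) ^ p :=
          ENNReal.rpow_le_rpow H hp0.le
      _ = ∫⁻ a, g a ^ p ∂μ := by
          rw [← ENNReal.rpow_mul, one_div, inv_mul_cancel₀ hp0.ne', ENNReal.rpow_one]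

theorem stmt_8
    {X Y : Type*} [MetricSpace X] [MeasurableSpace X] [BorelSpace X]
    [MetricSpace Y] [MeasurableSpace Y] [BorelSpace Y]
    (volX : Measure X) (volY : Measure Y) [SigmaFinite volX] [SigmaFinite volY]
    (lam₁ lam₂ c₁ c₂ : ℝ) (hlam₁ : 1 ≤ lam₁) (hlam₂ : 1 ≤ lam₂)
    (hc₁ : 0 ≤ c₁) (hc₂ : 0 ≤ c₂)
    (f : X → Y) (hf : Measurable f)
    (hqi : ∀ x x' : X,
      (dist x x' - c₂) / lam₂ ≤ dist (f x) (f x') ∧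
      dist (f x) (f x') ≤ lam₁ * dist x x' + c₁)
    (p : ℝ) (hp : 1 ≤ p)
    (φ : Y × Y → ℝ) (Sφ Rφ : ℝ)
    (hφmeas : Measurable φ) (hφnonneg : ∀ q, 0 ≤ φ q) (hφbdd : ∀ q, φ q ≤ Sφ)
    (hφint : ∀ y : Y, ∫ y', φ (y, y') ∂volY = 1)
    (hφsupp : ∀ y y' : Y, Rφ < dist y y' → φ (y, y') = 0)
    (ψ : X × X → ℝ) (Sψ Rψ : ℝ)
    (hψmeas : Measurable ψ) (hψnonneg : ∀ q, 0 ≤ ψ q) (hψbdd : ∀ q, ψ q ≤ Sψ)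
    (hψsupp : ∀ x x' : X, Rψ < dist x x' → ψ (x, x') = 0)
    (V : ENNReal)
    (hVdef : V = ⨆ x : X, volX (closedBall x (2 * lam₂ * Rφ + c₂)))
    (hVfin : V ≠ ⊤)
    (a : Y × Y → ℝ) (hameas : Measurable a)
    (A : X → X → ℝ)
    (hA : ∀ x x' : X, A x x' =
      ∫ q : Y × Y, a (q.1, q.2) * (φ (f x, q.1) * φ (f x', q.2)) ∂(volY.prod volY))
    (ψ' : Y → Y → ℝ)
    (hψ' : ∀ y y' : Y, ψ' y y' =
      ∫ q : X × X, φ (f q.1, y) * φ (f q.2, y') * ψ (q.1, q.2) ∂(volX.prod volX)) :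
    (∫⁻ q : X × X, ENNReal.ofReal (|A q.1 q.2| ^ p * ψ (q.1, q.2)) ∂(volX.prod volX)
        ≤ ∫⁻ q : Y × Y, ENNReal.ofReal (|a (q.1, q.2)| ^ p * ψ' q.1 q.2)
            ∂(volY.prod volY)) ∧
    (∀ y y' : Y, 2 * Rφ + lam₁ * Rψ + c₁ < dist y y' → ψ' y y' = 0) ∧
    (∀ y y' : Y, ψ' y y' ≤ Sψ * (Sφ * V.toReal) ^ 2) := by
  rcases isEmpty_or_nonempty X with hX | hX
  · -- degenerate case: X is empty
    have hV0 : V = 0 := by rw [hVdef]; exact iSup_of_empty _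
    have hprod : (volX.prod volX) = 0 := by
      have : volX = 0 := volX.eq_zero_of_isEmpty
      simp [this]
    have hψ'0 : ∀ y y' : Y, ψ' y y' = 0 := by
      intro y y'; rw [hψ' y y', hprod, integral_zero_measure]
    refine ⟨?_, fun y y' _ => hψ'0 y y', fun y y' => ?_⟩
    · rw [hprod]; simp
    · rw [hψ'0 y y', hV0]; simp
  · -- main case: X nonempty
    obtain ⟨x₀⟩ := hX
    have hSφ : 0 ≤ Sφ := le_trans (hφnonneg (f x₀, f x₀)) (hφbdd _)
    have hSψ : 0 ≤ Sψ := le_trans (hψnonneg (x₀, x₀)) (hψbdd _)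
    have hlam₂0 : (0:ℝ) < lam₂ := lt_of_lt_of_le zero_lt_one hlam₂
    have hlam₁0 : (0:ℝ) ≤ lam₁ := le_trans zero_le_one hlam₁
    have hp0 : (0:ℝ) < p := lt_of_lt_of_le zero_lt_one hp
    -- the preimages of closed balls have measure at most V
    have hT : ∀ y : Y, volX (f ⁻¹' closedBall y Rφ) ≤ V := by
      intro y
      rcases Set.eq_empty_or_nonempty (f ⁻¹' closedBall y Rφ) with h | ⟨x₁, hx₁⟩
      · simp [h]
      · refine le_trans (measure_mono ?_)
          (hVdef ▸ le_iSup (fun x => volX (closedBall x (2 * lam₂ * Rφ + c₂))) x₁)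
        intro x hx
        simp only [Set.mem_preimage, mem_closedBall] at hx hx₁ ⊢
        have h2 : dist (f x) (f x₁) ≤ 2 * Rφ := by
          have t1 := dist_triangle (f x) y (f x₁)
          have t2 := dist_comm y (f x₁)
          linarith [hx, hx₁]
        have h3 : dist x x₁ - c₂ ≤ dist (f x) (f x₁) * lam₂ :=
          (div_le_iff₀ hlam₂0).mp (hqi x x₁).1
        have h4 : dist (f x) (f x₁) * lam₂ ≤ 2 * Rφ * lam₂ :=
          mul_le_mul_of_nonneg_right h2 hlam₂0.le
        nlinarith
    -- measurability of the X-side integrand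
    have hGmeas : ∀ y y' : Y,
        Measurable (fun q : X × X => φ (f q.1, y) * φ (f q.2, y') * ψ (q.1, q.2)) := by
      intro y y'
      exact ((hφmeas.comp ((hf.comp measurable_fst).prodMk measurable_const)).mul
        (hφmeas.comp ((hf.comp measurable_snd).prodMk measurable_const))).mul hψmeas
    have hGnonneg : ∀ y y' : Y, ∀ q : X × X,
        0 ≤ φ (f q.1, y) * φ (f q.2, y') * ψ (q.1, q.2) := fun y y' q =>
      mul_nonneg (mul_nonneg (hφnonneg _) (hφnonneg _)) (hψnonneg _)
    -- the indicator bound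
    have hGbound : ∀ y y' : Y, ∀ q : X × X,
        φ (f q.1, y) * φ (f q.2, y') * ψ (q.1, q.2) ≤
        Set.indicator ((f ⁻¹' closedBall y Rφ) ×ˢ (f ⁻¹' closedBall y' Rφ))
          (fun _ => Sφ * Sφ * Sψ) q := by
      intro y y' q
      by_cases hq : q ∈ (f ⁻¹' closedBall y Rφ) ×ˢ (f ⁻¹' closedBall y' Rφ)
      · rw [Set.indicator_of_mem hq]
        have b1 := hφbdd (f q.1, y)
        have b2 := hφbdd (f q.2, y')
        have b3 := hψbdd (q.1, q.2)
        have n1 := hφnonneg (f q.1, y)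
        have n2 := hφnonneg (f q.2, y')
        have n3 := hψnonneg (q.1, q.2)
        exact mul_le_mul (mul_le_mul b1 b2 n2 hSφ) b3 n3 (mul_nonneg hSφ hSφ)
      · rw [Set.indicator_of_notMem hq]
        rw [Set.mem_prod, not_and_or] at hq
        rcases hq with hq | hq
        · simp only [Set.mem_preimage, mem_closedBall, not_le] at hq
          rw [hφsupp _ _ hq]; ring_nf; exact le_refl 0
        · simp only [Set.mem_preimage, mem_closedBall, not_le] at hq
          rw [hφsupp _ _ hq]; ring_nf; exact le_refl 0
    have hTmeas : ∀ y : Y, MeasurableSet (f ⁻¹' closedBall y Rφ) := fun y =>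
      hf measurableSet_closedBall
    have hIndInt : ∀ y y' : Y,
        Integrable (Set.indicator ((f ⁻¹' closedBall y Rφ) ×ˢ (f ⁻¹' closedBall y' Rφ))
          (fun _ => Sφ * Sφ * Sψ)) (volX.prod volX) := by
      intro y y'
      refine (integrable_indicator_iff ((hTmeas y).prod (hTmeas y'))).mpr ?_
      refine (integrableOn_const_iff).mpr (Or.inr ?_)
      rw [Measure.prod_prod]
      exact lt_of_le_of_lt (mul_le_mul' (hT y) (hT y'))
        (ENNReal.mul_lt_top hVfin.lt_top hVfin.lt_top)
    have hGint : ∀ y y' : Y,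
        Integrable (fun q : X × X => φ (f q.1, y) * φ (f q.2, y') * ψ (q.1, q.2))
          (volX.prod volX) := by
      intro y y'
      refine (hIndInt y y').mono' (hGmeas y y').aestronglyMeasurable
        (Filter.Eventually.of_forall fun q => ?_)
      rw [Real.norm_eq_abs, abs_of_nonneg (hGnonneg y y' q)]
      exact hGbound y y' q
    have hψ'nonneg : ∀ y y' : Y, 0 ≤ ψ' y y' := by
      intro y y'
      rw [hψ' y y']
      exact integral_nonneg (hGnonneg y y')
    -- ofReal of ψ' equals the lintegral
    have hψ'lint : ∀ y y' : Y,
        ∫⁻ q : X × X, ENNReal.ofReal (φ (f q.1, y) * φ (f q.2, y') * ψ (q.1, q.2))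
          ∂(volX.prod volX) = ENNReal.ofReal (ψ' y y') := by
      intro y y'
      rw [hψ' y y', ofReal_integral_eq_lintegral_ofReal (hGint y y')
        (Filter.Eventually.of_forall (hGnonneg y y'))]
    -- integrability of φ (z, ·)
    have hφint' : ∀ z : Y, Integrable (fun y' => φ (z, y')) volY := by
      intro z
      by_contra h
      have := hφint z
      rw [integral_undef h] at this
      exact one_ne_zero this.symm
    have hφlint : ∀ z : Y, ∫⁻ y', ENNReal.ofReal (φ (z, y')) ∂volY = 1 := by
      intro z
      rw [← ofReal_integral_eq_lintegral_ofReal (hφint' z)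
        (Filter.Eventually.of_forall fun y' => hφnonneg _), hφint z, ENNReal.ofReal_one]
    have hφm1 : ∀ z : Y, Measurable fun y : Y => ENNReal.ofReal (φ (z, y)) := fun z =>
      (hφmeas.comp (measurable_const.prodMk measurable_id)).ennreal_ofReal
    -- the weights are probability densities
    have hprob : ∀ x x' : X,
        ∫⁻ q : Y × Y, ENNReal.ofReal (φ (f x, q.1) * φ (f x', q.2)) ∂(volY.prod volY) = 1 := by
      intro x x'
      have heq : ∀ q : Y × Y, ENNReal.ofReal (φ (f x, q.1) * φ (f x', q.2)) =
          ENNReal.ofReal (φ (f x, q.1)) * ENNReal.ofReal (φ (f x', q.2)) := fun q =>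
        ENNReal.ofReal_mul (hφnonneg _)
      simp_rw [heq]
      rw [lintegral_prod_mul (hφm1 (f x)).aemeasurable (hφm1 (f x')).aemeasurable,
        hφlint, hφlint, mul_one]
    -- pointwise Jensen inequality
    have key : ∀ x x' : X, ENNReal.ofReal (|A x x'| ^ p) ≤
        ∫⁻ q : Y × Y, ENNReal.ofReal (φ (f x, q.1) * φ (f x', q.2)) * (‖a q‖₊ : ℝ≥0∞) ^ p
          ∂(volY.prod volY) := by
      intro x x'
      have hρmeas0 : Measurable (fun q : Y × Y => φ (f x, q.1) * φ (f x', q.2)) :=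
        (hφmeas.comp (measurable_const.prodMk measurable_fst)).mul
          (hφmeas.comp (measurable_const.prodMk measurable_snd))
      set ρ : Y × Y → ℝ≥0∞ := fun q => ENNReal.ofReal (φ (f x, q.1) * φ (f x', q.2)) with hρ
      have hρmeas : Measurable ρ := hρmeas0.ennreal_ofReal
      set μ : Measure (Y × Y) := (volY.prod volY).withDensity ρ with hμ
      have : IsProbabilityMeasure μ := by
        constructor
        rw [hμ, withDensity_apply _ MeasurableSet.univ, setLIntegral_univ]
        exact hprob x x'
      have hAeq : A x x' = ∫ q, a q ∂μ := by
        rw [hA x x']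
        have hρ' : ρ = fun q =>
            (((fun q : Y × Y => (φ (f x, q.1) * φ (f x', q.2)).toNNReal) q : ℝ≥0) : ℝ≥0∞) := by
          funext q; simp [hρ, ENNReal.ofReal]
        rw [hμ, hρ', integral_withDensity_eq_integral_smul hρmeas0.real_toNNReal]
        refine integral_congr_ae (Filter.Eventually.of_forall fun q => ?_)
        simp only [NNReal.smul_def, smul_eq_mul]
        rw [Real.coe_toNNReal _ (mul_nonneg (hφnonneg _) (hφnonneg _)), mul_comm]
      calc ENNReal.ofReal (|A x x'| ^ p)
          = (‖A x x'‖₊ : ℝ≥0∞) ^ p := by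
            rw [← ENNReal.ofReal_rpow_of_nonneg (abs_nonneg _) hp0.le,
              ← Real.enorm_eq_ofReal_abs, enorm_eq_nnnorm]
        _ ≤ (∫⁻ q, (‖a q‖₊ : ℝ≥0∞) ∂μ) ^ p := by
            refine ENNReal.rpow_le_rpow ?_ hp0.le
            rw [hAeq]
            exact enorm_integral_le_lintegral_enorm _
        _ ≤ ∫⁻ q, (‖a q‖₊ : ℝ≥0∞) ^ p ∂μ :=
            jensen_rpow μ hameas.enorm.aemeasurable hp
        _ = ∫⁻ q, ρ q * (‖a q‖₊ : ℝ≥0∞) ^ p ∂(volY.prod volY) :=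
            lintegral_withDensity_eq_lintegral_mul _ hρmeas (hameas.enorm.pow_const p)
    -- the main estimate
    refine ⟨?_, ?_, ?_⟩
    · -- part (i)
      have hrpow_ne_top : ∀ r : Y × Y, ((‖a r‖₊ : ℝ≥0∞)) ^ p ≠ ⊤ := fun r =>
        ENNReal.rpow_ne_top_of_nonneg hp0.le ENNReal.coe_ne_top
      calc ∫⁻ q : X × X, ENNReal.ofReal (|A q.1 q.2| ^ p * ψ (q.1, q.2)) ∂(volX.prod volX)
          = ∫⁻ q : X × X, ENNReal.ofReal (|A q.1 q.2| ^ p) * ENNReal.ofReal (ψ (q.1, q.2))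
              ∂(volX.prod volX) := by
            refine lintegral_congr fun q => ?_
            rw [ENNReal.ofReal_mul (Real.rpow_nonneg (abs_nonneg _) p)]
        _ ≤ ∫⁻ q : X × X,
              (∫⁻ r : Y × Y, ENNReal.ofReal (φ (f q.1, r.1) * φ (f q.2, r.2)) *
                (‖a r‖₊ : ℝ≥0∞) ^ p ∂(volY.prod volY)) * ENNReal.ofReal (ψ (q.1, q.2))
              ∂(volX.prod volX) :=
            lintegral_mono fun q => mul_le_mul_left (key q.1 q.2) _
        _ = ∫⁻ q : X × X, ∫⁻ r : Y × Y,
              ENNReal.ofReal (φ (f q.1, r.1) * φ (f q.2, r.2)) * (‖a r‖₊ : ℝ≥0∞) ^ p *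
                ENNReal.ofReal (ψ (q.1, q.2)) ∂(volY.prod volY) ∂(volX.prod volX) := by
            refine lintegral_congr fun q => ?_
            rw [lintegral_mul_const' _ _ ENNReal.ofReal_ne_top]
        _ = ∫⁻ r : Y × Y, ∫⁻ q : X × X,
              ENNReal.ofReal (φ (f q.1, r.1) * φ (f q.2, r.2)) * (‖a r‖₊ : ℝ≥0∞) ^ p *
                ENNReal.ofReal (ψ (q.1, q.2)) ∂(volX.prod volX) ∂(volY.prod volY) := by
            refine lintegral_lintegral_swap ?_
            apply Measurable.aemeasurable
            refine Measurable.mul (Measurable.mul ?_ ?_) ?_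
            · refine Measurable.ennreal_ofReal ?_
              exact (hφmeas.comp ((hf.comp (measurable_fst.comp measurable_fst)).prodMk
                (measurable_fst.comp measurable_snd))).mul
                (hφmeas.comp ((hf.comp (measurable_snd.comp measurable_fst)).prodMk
                (measurable_snd.comp measurable_snd)))
            · exact ((hameas.comp measurable_snd).enorm.pow_const p)
            · exact (hψmeas.comp measurable_fst).ennreal_ofReal
        _ = ∫⁻ r : Y × Y, (‖a r‖₊ : ℝ≥0∞) ^ p * ENNReal.ofReal (ψ' r.1 r.2)
              ∂(volY.prod volY) := by
            refine lintegral_congr fun r => ?_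
            have hpt : ∀ q : X × X,
                ENNReal.ofReal (φ (f q.1, r.1) * φ (f q.2, r.2)) * (‖a r‖₊ : ℝ≥0∞) ^ p *
                  ENNReal.ofReal (ψ (q.1, q.2)) =
                (‖a r‖₊ : ℝ≥0∞) ^ p *
                  ENNReal.ofReal (φ (f q.1, r.1) * φ (f q.2, r.2) * ψ (q.1, q.2)) := by
              intro q
              rw [ENNReal.ofReal_mul (mul_nonneg (hφnonneg _) (hφnonneg _))]
              ring
            simp_rw [hpt]
            rw [lintegral_const_mul' _ _ (hrpow_ne_top r), hψ'lint r.1 r.2]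
        _ = ∫⁻ q : Y × Y, ENNReal.ofReal (|a (q.1, q.2)| ^ p * ψ' q.1 q.2)
              ∂(volY.prod volY) := by
            refine lintegral_congr fun r => ?_
            rw [ENNReal.ofReal_mul (Real.rpow_nonneg (abs_nonneg _) p),
              ← ENNReal.ofReal_rpow_of_nonneg (abs_nonneg _) hp0.le,
              ← Real.enorm_eq_ofReal_abs, enorm_eq_nnnorm]
    · -- part (ii)
      intro y y' hd
      rw [hψ' y y']
      have h0 : ∀ q : X × X, φ (f q.1, y) * φ (f q.2, y') * ψ (q.1, q.2) = 0 := by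
        intro q
        by_cases h1 : Rφ < dist (f q.1) y
        · rw [hφsupp _ _ h1]; ring
        by_cases h2 : Rφ < dist (f q.2) y'
        · rw [hφsupp _ _ h2]; ring
        push_neg at h1 h2
        have h3 : Rψ < dist q.1 q.2 := by
          by_contra h3
          push_neg at h3
          have t1 := (hqi q.1 q.2).2
          have t2 := dist_triangle y (f q.1) y'
          have t3 := dist_triangle (f q.1) (f q.2) y'
          have t4 := dist_comm y (f q.1)
          have t5 : lam₁ * dist q.1 q.2 ≤ lam₁ * Rψ := mul_le_mul_of_nonneg_left h3 hlam₁0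
          linarith
        rw [hψsupp _ _ h3]; ring
      calc ∫ q : X × X, φ (f q.1, y) * φ (f q.2, y') * ψ (q.1, q.2) ∂(volX.prod volX)
          = ∫ _ : X × X, (0:ℝ) ∂(volX.prod volX) :=
            integral_congr_ae (Filter.Eventually.of_forall h0)
        _ = 0 := integral_zero _ _
    · -- part (iii)
      intro y y'
      rw [hψ' y y']
      have hmono : ∫ q : X × X, φ (f q.1, y) * φ (f q.2, y') * ψ (q.1, q.2) ∂(volX.prod volX) ≤
          ∫ q : X × X, Set.indicator ((f ⁻¹' closedBall y Rφ) ×ˢ (f ⁻¹' closedBall y' Rφ))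
            (fun _ => Sφ * Sφ * Sψ) q ∂(volX.prod volX) :=
        integral_mono (hGint y y') (hIndInt y y') (hGbound y y')
      have hind : ∫ q : X × X, Set.indicator ((f ⁻¹' closedBall y Rφ) ×ˢ (f ⁻¹' closedBall y' Rφ))
            (fun _ => Sφ * Sφ * Sψ) q ∂(volX.prod volX) =
          ((volX.prod volX) ((f ⁻¹' closedBall y Rφ) ×ˢ (f ⁻¹' closedBall y' Rφ))).toReal *
            (Sφ * Sφ * Sψ) := by
        rw [integral_indicator_const _ ((hTmeas y).prod (hTmeas y')), smul_eq_mul, measureReal_def]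
      have hmeasbound :
          ((volX.prod volX) ((f ⁻¹' closedBall y Rφ) ×ˢ (f ⁻¹' closedBall y' Rφ))).toReal ≤
            V.toReal * V.toReal := by
        rw [Measure.prod_prod, ENNReal.toReal_mul]
        have h1 : (volX (f ⁻¹' closedBall y Rφ)).toReal ≤ V.toReal :=
          ENNReal.toReal_mono hVfin (hT y)
        have h2 : (volX (f ⁻¹' closedBall y' Rφ)).toReal ≤ V.toReal :=
          ENNReal.toReal_mono hVfin (hT y')
        exact mul_le_mul h1 h2 ENNReal.toReal_nonneg ENNReal.toReal_nonneg
      have hVt : (0:ℝ) ≤ V.toReal := ENNReal.toReal_nonneg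
      have hmt : (0:ℝ) ≤ ((volX.prod volX)
          ((f ⁻¹' closedBall y Rφ) ×ˢ (f ⁻¹' closedBall y' Rφ))).toReal :=
        ENNReal.toReal_nonneg
      calc ∫ q : X × X, φ (f q.1, y) * φ (f q.2, y') * ψ (q.1, q.2) ∂(volX.prod volX)
          ≤ ((volX.prod volX) ((f ⁻¹' closedBall y Rφ) ×ˢ (f ⁻¹' closedBall y' Rφ))).toReal *
              (Sφ * Sφ * Sψ) := by rw [← hind]; exact hmono
        _ ≤ (V.toReal * V.toReal) * (Sφ * Sφ * Sψ) :=
            mul_le_mul_of_nonneg_right hmeasbound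
              (mul_nonneg (mul_nonneg hSφ hSφ) hSψ)
        _ = Sψ * (Sφ * V.toReal) ^ 2 := by ring
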